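/- Let G be a cubic graph with V = {v₁,…,v_n}, E = {e₁,…,e_m}. Build G' with vertex set V ∪ V* (V* = {v*₁,…,v*_n} a disjoint copy), edges E ∪ E* ∪ {{v_i, v*_i} : i}, where E* = {{v*_i, v*_j} : {v_i,v_j} ∈ E}. Habitats: H_ℓ = e_ℓ, H*_ℓ = e*_ℓ, and H'_ℓ = e_ℓ ∪ e*_ℓ for each e_ℓ ∈ E. Then G has a vertex cover of size at most p if and only if there is F ⊆ E(G') with |F| ≤ 2m + p satisfying every habitat. -/

import Mathlib

open SimpleGraph
open scoped Classical

def SatisfiesHab {V : Type*} (F : Set (Sym2 V)) (H : Set V) : Prop :=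
  (∀ v ∈ H, ∃ e ∈ F, v ∈ e) ∧ ((SimpleGraph.fromEdgeSet F).induce H).Connected

/-- Two copies of `G` joined by a perfect matching between corresponding vertices. -/
def doubleGraph {V : Type*} (G : SimpleGraph V) : SimpleGraph (V ⊕ V) where
  Adj a b := match a, b with
    | .inl u, .inl v => G.Adj u v
    | .inr u, .inr v => G.Adj u v
    | .inl u, .inr v => u = v
    | .inr u, .inl v => u = v
  symm := by
    constructor
    rintro (u | u) (v | v) h
    · exact G.symm.symm _ _ h
    · exact h.symm
    · exact h.symm
    · exact G.symm.symm _ _ h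
  loopless := by
    constructor
    rintro (u | u) h <;> exact G.loopless.irrefl u h

lemma satHab_pair {V : Type*} (F : Set (Sym2 V)) {a b : V} (hab : a ≠ b) (h : s(a,b) ∈ F) :
    SatisfiesHab F {a, b} := by
  constructor
  · intro v hv
    rcases hv with rfl | rfl <;> exact ⟨_, h, by simp⟩
  · have ha : a ∈ ({a,b} : Set V) := by simp
    have hb : b ∈ ({a,b} : Set V) := by simp
    haveI : Nonempty (({a,b} : Set V)) := ⟨⟨a, ha⟩⟩
    refine ⟨fun x y => ?_⟩
    have adj : ((fromEdgeSet F).induce {a,b}).Adj ⟨a, ha⟩ ⟨b, hb⟩ := by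
      show (fromEdgeSet F).Adj a b
      rw [fromEdgeSet_adj]; exact ⟨h, hab⟩
    have key : ∀ z : ({a,b} : Set V), ((fromEdgeSet F).induce {a,b}).Reachable z ⟨a, ha⟩ := by
      rintro ⟨z, (rfl | rfl)⟩
      · rfl
      · exact adj.symm.reachable
    exact (key x).trans (key y).symm

lemma pair_mem_of_conn {V : Type*} {F : Set (Sym2 V)} {a b : V} (hab : a ≠ b)
    (h : ((SimpleGraph.fromEdgeSet F).induce {a, b}).Connected) : s(a,b) ∈ F := by
  have ha : a ∈ ({a,b} : Set V) := by simp
  have hb : b ∈ ({a,b} : Set V) := by simp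
  obtain ⟨w⟩ := h.preconnected ⟨a, ha⟩ ⟨b, hb⟩
  cases w with
  | nil => exact absurd rfl hab
  | cons hadj q =>
    rename_i x
    obtain ⟨x, (rfl | rfl)⟩ := x
    · exact absurd hadj (by simp)
    · have : (fromEdgeSet F).Adj a x := hadj
      rw [fromEdgeSet_adj] at this
      exact this.1

lemma satHab_quad {V : Type*} {F : Set (Sym2 (V ⊕ V))} {u v : V} (hne : u ≠ v)
    (h1 : s(Sum.inl u, Sum.inl v) ∈ F) (h2 : s(Sum.inr u, Sum.inr v) ∈ F)
    (h3 : s(Sum.inl u, Sum.inr u) ∈ F ∨ s(Sum.inl v, Sum.inr v) ∈ F) :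
    SatisfiesHab F ({Sum.inl u, Sum.inl v, Sum.inr u, Sum.inr v} : Set (V ⊕ V)) := by
  set S : Set (V ⊕ V) := {Sum.inl u, Sum.inl v, Sum.inr u, Sum.inr v} with hS
  have mA : (Sum.inl u : V ⊕ V) ∈ S := by simp [hS]
  have mB : (Sum.inl v : V ⊕ V) ∈ S := by simp [hS]
  have mC : (Sum.inr u : V ⊕ V) ∈ S := by simp [hS]
  have mD : (Sum.inr v : V ⊕ V) ∈ S := by simp [hS]
  constructor
  · intro x hx
    rcases hx with rfl | rfl | rfl | rfl
    · exact ⟨_, h1, by simp⟩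
    · exact ⟨_, h1, by simp⟩
    · exact ⟨_, h2, by simp⟩
    · exact ⟨_, h2, by simp⟩
  · haveI : Nonempty S := ⟨⟨_, mA⟩⟩
    refine ⟨fun x y => ?_⟩
    have adj1 : ((fromEdgeSet F).induce S).Adj ⟨_, mA⟩ ⟨_, mB⟩ := by
      show (fromEdgeSet F).Adj (Sum.inl u) (Sum.inl v)
      rw [fromEdgeSet_adj]
      exact ⟨h1, by simp [hne]⟩
    have adj2 : ((fromEdgeSet F).induce S).Adj ⟨_, mC⟩ ⟨_, mD⟩ := by
      show (fromEdgeSet F).Adj (Sum.inr u) (Sum.inr v)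
      rw [fromEdgeSet_adj]
      exact ⟨h2, by simp [hne]⟩
    have rC : ((fromEdgeSet F).induce S).Reachable ⟨_, mC⟩ ⟨_, mA⟩ := by
      rcases h3 with h3 | h3
      · have aCA : ((fromEdgeSet F).induce S).Adj ⟨_, mC⟩ ⟨_, mA⟩ := by
          show (fromEdgeSet F).Adj (Sum.inr u) (Sum.inl u)
          rw [fromEdgeSet_adj]
          exact ⟨by rwa [Sym2.eq_swap], by simp⟩
        exact aCA.reachable
      · have aDB : ((fromEdgeSet F).induce S).Adj ⟨_, mD⟩ ⟨_, mB⟩ := by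
          show (fromEdgeSet F).Adj (Sum.inr v) (Sum.inl v)
          rw [fromEdgeSet_adj]
          exact ⟨by rwa [Sym2.eq_swap], by simp⟩
        exact adj2.reachable.trans (aDB.reachable.trans adj1.symm.reachable)
    have key : ∀ z : S, ((fromEdgeSet F).induce S).Reachable z ⟨_, mA⟩ := by
      rintro ⟨z, (rfl | rfl | rfl | rfl)⟩
      · rfl
      · exact adj1.symm.reachable
      · exact rC
      · exact adj2.symm.reachable.trans rC
    exact (key x).trans (key y).symm

lemma cross_exists {V : Type*} {F : Set (Sym2 (V ⊕ V))} {S : Set (V ⊕ V)}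
    {x y : S} (w : ((SimpleGraph.fromEdgeSet F).induce S).Walk x y)
    (hx : (x : V ⊕ V).isLeft) (hy : ¬ (y : V ⊕ V).isLeft) :
    ∃ a b : V, s(Sum.inl a, Sum.inr b) ∈ F ∧ (Sum.inl a) ∈ S ∧ (Sum.inr b) ∈ S := by
  revert hx hy
  induction w with
  | nil => intro hx hy; exact absurd hx hy
  | @cons x' z y' hadj q ih =>
    intro hx hy
    by_cases hz : (z : V ⊕ V).isLeft
    · exact ih hz hy
    · obtain ⟨a, ha⟩ : ∃ a, (x' : V ⊕ V) = Sum.inl a := by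
        cases hxv : (x' : V ⊕ V) with
        | inl a => exact ⟨a, rfl⟩
        | inr a => rw [hxv] at hx; simp at hx
      obtain ⟨b, hb⟩ : ∃ b, (z : V ⊕ V) = Sum.inr b := by
        cases hzv : (z : V ⊕ V) with
        | inl a => rw [hzv] at hz; simp at hz
        | inr a => exact ⟨a, rfl⟩
      have had : (fromEdgeSet F).Adj x' z := hadj
      rw [fromEdgeSet_adj] at had
      refine ⟨a, b, ?_, ha ▸ x'.2, hb ▸ z.2⟩
      rw [← ha, ← hb]
      exact had.1

lemma habset_inl_eq {V : Type*} (u v : V) :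
    {a | ∃ w ∈ s(u,v), a = Sum.inl w} = ({Sum.inl u, Sum.inl v} : Set (V ⊕ V)) := by
  ext a; simp [Sym2.mem_iff]; try tauto

lemma habset_inr_eq {V : Type*} (u v : V) :
    {a | ∃ w ∈ s(u,v), a = Sum.inr w} = ({Sum.inr u, Sum.inr v} : Set (V ⊕ V)) := by
  ext a; simp [Sym2.mem_iff]; try tauto

lemma habset_union_eq {V : Type*} (u v : V) :
    ({a | ∃ w ∈ s(u,v), a = Sum.inl w} ∪ {a | ∃ w ∈ s(u,v), a = Sum.inr w})
      = ({Sum.inl u, Sum.inl v, Sum.inr u, Sum.inr v} : Set (V ⊕ V)) := by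
  ext a; simp [Sym2.mem_iff]; try tauto

/-- Reduction from Cubic Vertex Cover via two copies joined by a matching: `G` cubic has a
vertex cover of size at most `p` iff there is `F ⊆ E(G')` with `|F| ≤ 2m + p` satisfying
all habitats `Hₗ = eₗ`, `H*ₗ = e*ₗ` and `H'ₗ = eₗ ∪ e*ₗ`. -/
theorem stmt16 {V : Type*} [Fintype V] (G : SimpleGraph V)
    (hcubic : ∀ v, (G.neighborSet v).ncard = 3) (p : ℕ) :
    (∃ C : Set V, C.ncard ≤ p ∧ ∀ e ∈ G.edgeSet, ∃ v ∈ C, v ∈ e) ↔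
    (∃ F : Set (Sym2 (V ⊕ V)), F ⊆ (doubleGraph G).edgeSet ∧
      F.ncard ≤ 2 * G.edgeSet.ncard + p ∧
      ∀ e ∈ G.edgeSet,
        SatisfiesHab F {a | ∃ v ∈ e, a = Sum.inl v} ∧
        SatisfiesHab F {a | ∃ v ∈ e, a = Sum.inr v} ∧
        SatisfiesHab F ({a | ∃ v ∈ e, a = Sum.inl v} ∪ {a | ∃ v ∈ e, a = Sum.inr v})) := by
  have injL : Function.Injective (Sum.inl : V → V ⊕ V) := Sum.inl_injective
  have injR : Function.Injective (Sum.inr : V → V ⊕ V) := Sum.inr_injective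
  have injM : Function.Injective (fun v : V => s(Sum.inl v, Sum.inr v) : V → Sym2 (V ⊕ V)) := by
    intro a b h
    simp [Sym2.eq_iff] at h
    exact h
  constructor
  · rintro ⟨C, hCcard, hCcover⟩
    refine ⟨(Sym2.map Sum.inl '' G.edgeSet) ∪ (Sym2.map Sum.inr '' G.edgeSet) ∪
      ((fun v => s(Sum.inl v, Sum.inr v)) '' C), ?_, ?_, ?_⟩
    · rintro x ((⟨e, he, rfl⟩ | ⟨e, he, rfl⟩) | ⟨v, hv, rfl⟩)
      · revert he
        induction e using Sym2.ind with
        | _ u v =>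
          intro he
          rw [Sym2.map_pair_eq, SimpleGraph.mem_edgeSet]
          exact he
      · revert he
        induction e using Sym2.ind with
        | _ u v =>
          intro he
          rw [Sym2.map_pair_eq, SimpleGraph.mem_edgeSet]
          exact he
      · rw [SimpleGraph.mem_edgeSet]
        show v = v
        rfl
    · calc ((Sym2.map Sum.inl '' G.edgeSet) ∪ (Sym2.map Sum.inr '' G.edgeSet) ∪
            ((fun v => s(Sum.inl v, Sum.inr v)) '' C)).ncard
          ≤ ((Sym2.map Sum.inl '' G.edgeSet) ∪ (Sym2.map Sum.inr '' G.edgeSet)).ncard +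
            ((fun v => s(Sum.inl v, Sum.inr v)) '' C).ncard := Set.ncard_union_le _ _
        _ ≤ ((Sym2.map Sum.inl '' G.edgeSet).ncard + (Sym2.map Sum.inr '' G.edgeSet).ncard) +
            ((fun v => s(Sum.inl v, Sum.inr v)) '' C).ncard := by
              exact Nat.add_le_add_right (Set.ncard_union_le _ _) _
        _ = G.edgeSet.ncard + G.edgeSet.ncard + C.ncard := by
              rw [Set.ncard_image_of_injective _ (Sym2.map.injective injL),
                Set.ncard_image_of_injective _ (Sym2.map.injective injR),
                Set.ncard_image_of_injective _ injM]
        _ ≤ 2 * G.edgeSet.ncard + p := by omega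
    · intro e he
      revert he
      induction e using Sym2.ind with
      | _ u v =>
        intro he
        have hadj : G.Adj u v := he
        have hne : u ≠ v := hadj.ne
        have h1 : s(Sum.inl u, Sum.inl v) ∈ (Sym2.map Sum.inl '' G.edgeSet) ∪
            (Sym2.map Sum.inr '' G.edgeSet) ∪ ((fun v => s(Sum.inl v, Sum.inr v)) '' C) :=
          Or.inl (Or.inl ⟨s(u,v), he, Sym2.map_pair_eq _ _ _⟩)
        have h2 : s(Sum.inr u, Sum.inr v) ∈ (Sym2.map Sum.inl '' G.edgeSet) ∪
            (Sym2.map Sum.inr '' G.edgeSet) ∪ ((fun v => s(Sum.inl v, Sum.inr v)) '' C) :=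
          Or.inl (Or.inr ⟨s(u,v), he, Sym2.map_pair_eq _ _ _⟩)
        have h3 : s(Sum.inl u, Sum.inr u) ∈ (Sym2.map Sum.inl '' G.edgeSet) ∪
              (Sym2.map Sum.inr '' G.edgeSet) ∪ ((fun v => s(Sum.inl v, Sum.inr v)) '' C) ∨
            s(Sum.inl v, Sum.inr v) ∈ (Sym2.map Sum.inl '' G.edgeSet) ∪
              (Sym2.map Sum.inr '' G.edgeSet) ∪ ((fun v => s(Sum.inl v, Sum.inr v)) '' C) := by
          obtain ⟨w, hwC, hw⟩ := hCcover s(u,v) he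
          rcases Sym2.mem_iff.mp hw with rfl | rfl
          · exact Or.inl (Or.inr ⟨w, hwC, rfl⟩)
          · exact Or.inr (Or.inr ⟨w, hwC, rfl⟩)
        refine ⟨?_, ?_, ?_⟩
        · rw [habset_inl_eq]
          exact satHab_pair _ (fun h => hne (injL h)) h1
        · rw [habset_inr_eq]
          exact satHab_pair _ (fun h => hne (injR h)) h2
        · rw [habset_union_eq]
          exact satHab_quad hne h1 h2 h3
  · rintro ⟨F, hFsub, hFcard, hhab⟩
    set C : Set V := {v | s(Sum.inl v, Sum.inr v) ∈ F} with hCdef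
    have hE1 : Sym2.map Sum.inl '' G.edgeSet ⊆ F := by
      rintro x ⟨e, he, rfl⟩
      revert he
      induction e using Sym2.ind with
      | _ u v =>
        intro he
        have hne : u ≠ v := (G.mem_edgeSet.mp he).ne
        rw [Sym2.map_pair_eq]
        have := (hhab s(u,v) he).1.2
        rw [habset_inl_eq] at this
        exact pair_mem_of_conn (fun h => hne (injL h)) this
    have hE2 : Sym2.map Sum.inr '' G.edgeSet ⊆ F := by
      rintro x ⟨e, he, rfl⟩
      revert he
      induction e using Sym2.ind with
      | _ u v =>
        intro he
        have hne : u ≠ v := (G.mem_edgeSet.mp he).ne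
        rw [Sym2.map_pair_eq]
        have := (hhab s(u,v) he).2.1.2
        rw [habset_inr_eq] at this
        exact pair_mem_of_conn (fun h => hne (injR h)) this
    have hM : (fun v : V => s(Sum.inl v, Sum.inr v)) '' C ⊆ F := by
      rintro x ⟨v, hv, rfl⟩
      exact hv
    refine ⟨C, ?_, ?_⟩
    · -- cardinality bound
      have hsub : (Sym2.map Sum.inl '' G.edgeSet) ∪ (Sym2.map Sum.inr '' G.edgeSet) ∪
          ((fun v : V => s(Sum.inl v, Sum.inr v)) '' C) ⊆ F := by
        rintro x ((hx | hx) | hx)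
        · exact hE1 hx
        · exact hE2 hx
        · exact hM hx
      have d12 : Disjoint (Sym2.map Sum.inl '' G.edgeSet) (Sym2.map Sum.inr '' G.edgeSet) := by
        rw [Set.disjoint_left]
        rintro x ⟨e, he, rfl⟩ ⟨e', he', hx⟩
        revert hx
        induction e using Sym2.ind with
        | _ u v =>
          induction e' using Sym2.ind with
          | _ u' v' =>
            intro hx
            rw [Sym2.map_pair_eq, Sym2.map_pair_eq] at hx
            simp [Sym2.eq_iff] at hx
      have dM : Disjoint ((Sym2.map Sum.inl '' G.edgeSet) ∪ (Sym2.map Sum.inr '' G.edgeSet))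
          ((fun v : V => s(Sum.inl v, Sum.inr v)) '' C) := by
        rw [Set.disjoint_left]
        rintro x (⟨e, he, rfl⟩ | ⟨e, he, rfl⟩) ⟨v, hv, hx⟩ <;>
        · revert hx
          induction e using Sym2.ind with
          | _ u' v' =>
            intro hx
            rw [Sym2.map_pair_eq] at hx
            simp [Sym2.eq_iff] at hx
      have hle : ((Sym2.map Sum.inl '' G.edgeSet) ∪ (Sym2.map Sum.inr '' G.edgeSet) ∪
          ((fun v : V => s(Sum.inl v, Sum.inr v)) '' C)).ncard ≤ F.ncard :=
        Set.ncard_le_ncard hsub (Set.toFinite F)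
      rw [Set.ncard_union_eq dM (Set.toFinite _) (Set.toFinite _),
        Set.ncard_union_eq d12 (Set.toFinite _) (Set.toFinite _),
        Set.ncard_image_of_injective _ (Sym2.map.injective injL),
        Set.ncard_image_of_injective _ (Sym2.map.injective injR),
        Set.ncard_image_of_injective _ injM] at hle
      omega
    · -- vertex cover
      intro e he
      revert he
      induction e using Sym2.ind with
      | _ u v =>
        intro he
        have hconn := (hhab s(u,v) he).2.2.2
        rw [habset_union_eq] at hconn
        set S : Set (V ⊕ V) := {Sum.inl u, Sum.inl v, Sum.inr u, Sum.inr v} with hS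
        have mA : (Sum.inl u : V ⊕ V) ∈ S := by simp [hS]
        have mC : (Sum.inr u : V ⊕ V) ∈ S := by simp [hS]
        obtain ⟨w⟩ := hconn.preconnected ⟨_, mA⟩ ⟨_, mC⟩
        obtain ⟨a, b, habF, haS, hbS⟩ := cross_exists w (by simp) (by simp)
        have hab : a = b := hFsub habF
        subst hab
        have : a = u ∨ a = v := by
          rcases haS with h | h | h | h <;> simp_all
        rcases this with rfl | rfl
        · exact ⟨a, habF, by simp⟩
        · exact ⟨a, habF, by simp⟩
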